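/- For independent real-valued random variables X and Y with finite first moments and cumulative distribution functions F and G respectively, 2E|X-Y| - E|X-X'| - E|Y-Y'| = 2∫_{-∞}^{∞} (F(t) - G(t))^2 dt. -/

import Mathlib

open MeasureTheory ProbabilityTheory

open Set

lemma key_lintegral {Ω : Type*} [MeasurableSpace Ω] {μ : Measure Ω} [IsProbabilityMeasure μ]
    (X Y : Ω → ℝ) (hX : Measurable X) (hY : Measurable Y) :
    ∫⁻ t : ℝ, (μ (X ⁻¹' Iic t ∩ Y ⁻¹' Ioi t) + μ (Y ⁻¹' Iic t ∩ X ⁻¹' Ioi t))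
      = ∫⁻ ω, ENNReal.ofReal |X ω - Y ω| ∂μ := by
  set S : Set (Ω × ℝ) := {p | min (X p.1) (Y p.1) ≤ p.2 ∧ p.2 < max (X p.1) (Y p.1)} with hSdef
  have hS : MeasurableSet S := by
    apply MeasurableSet.inter
    · exact measurableSet_le (((hX.comp measurable_fst).min (hY.comp measurable_fst))) measurable_snd
    · exact measurableSet_lt measurable_snd ((hX.comp measurable_fst).max (hY.comp measurable_fst))
  have hmeas : AEMeasurable (Function.uncurry fun (ω : Ω) (t : ℝ) => S.indicator (1 : Ω × ℝ → ENNReal) (ω, t)) (μ.prod volume) := by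
    have : (Function.uncurry fun (ω : Ω) (t : ℝ) => S.indicator (1 : Ω × ℝ → ENNReal) (ω, t))
        = S.indicator (1 : Ω × ℝ → ENNReal) := rfl
    rw [this]
    exact (measurable_const.indicator hS).aemeasurable
  have swap := lintegral_lintegral_swap hmeas
  have h1 : ∀ ω, ∫⁻ t, S.indicator (1 : Ω × ℝ → ENNReal) (ω, t) = ENNReal.ofReal |X ω - Y ω| := by
    intro ω
    have : (fun t => S.indicator (1 : Ω × ℝ → ENNReal) (ω, t))
        = (Ico (min (X ω) (Y ω)) (max (X ω) (Y ω))).indicator (1 : ℝ → ENNReal) := by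
      ext t
      simp only [hSdef, Set.indicator_apply, Set.mem_setOf_eq, Set.mem_Ico, Pi.one_apply]
    rw [this, lintegral_indicator_one measurableSet_Ico, Real.volume_Ico, max_sub_min_eq_abs,
      abs_sub_comm]
  have h2 : ∀ t : ℝ, ∫⁻ ω, S.indicator (1 : Ω × ℝ → ENNReal) (ω, t) ∂μ
      = μ (X ⁻¹' Iic t ∩ Y ⁻¹' Ioi t) + μ (Y ⁻¹' Iic t ∩ X ⁻¹' Ioi t) := by
    intro t
    have hset : {ω | (ω, t) ∈ S} = (X ⁻¹' Iic t ∩ Y ⁻¹' Ioi t) ∪ (Y ⁻¹' Iic t ∩ X ⁻¹' Ioi t) := by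
      ext ω
      simp only [hSdef, Set.mem_setOf_eq, min_le_iff, lt_max_iff, Set.mem_union, Set.mem_inter_iff,
        Set.mem_preimage, Set.mem_Iic, Set.mem_Ioi]
      constructor
      · rintro ⟨h1 | h1, h2 | h2⟩
        · exact absurd h2 (not_lt.2 h1)
        · exact Or.inl ⟨h1, h2⟩
        · exact Or.inr ⟨h1, h2⟩
        · exact absurd h2 (not_lt.2 h1)
      · rintro (⟨h1, h2⟩ | ⟨h1, h2⟩)
        · exact ⟨Or.inl h1, Or.inr h2⟩
        · exact ⟨Or.inr h1, Or.inl h2⟩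
    have hmS : ∀ t : ℝ, MeasurableSet {ω | (ω, t) ∈ S} := fun t =>
      (measurable_prodMk_right hS : _)
    have : (fun ω => S.indicator (1 : Ω × ℝ → ENNReal) (ω, t))
        = ({ω | (ω, t) ∈ S}).indicator (1 : Ω → ENNReal) := by
      ext ω
      simp only [Set.indicator_apply, Set.mem_setOf_eq, Pi.one_apply]
    rw [this, lintegral_indicator_one (hmS t), hset, measure_union _ ((hY measurableSet_Iic).inter (hX measurableSet_Ioi))]
    rw [Set.disjoint_left]
    rintro ω ⟨_, h2⟩ ⟨h3, _⟩
    simp only [Set.mem_preimage, Set.mem_Iic, Set.mem_Ioi] at h2 h3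
    exact absurd h3 (not_le.2 h2)
  calc ∫⁻ t : ℝ, (μ (X ⁻¹' Iic t ∩ Y ⁻¹' Ioi t) + μ (Y ⁻¹' Iic t ∩ X ⁻¹' Ioi t))
      = ∫⁻ t, ∫⁻ ω, S.indicator (1 : Ω × ℝ → ENNReal) (ω, t) ∂μ ∂volume := by
        exact (lintegral_congr h2).symm
    _ = ∫⁻ ω, ∫⁻ t, S.indicator (1 : Ω × ℝ → ENNReal) (ω, t) ∂volume ∂μ := swap.symm
    _ = ∫⁻ ω, ENNReal.ofReal |X ω - Y ω| ∂μ := lintegral_congr h1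

lemma key_integral {Ω : Type*} [MeasurableSpace Ω] {μ : Measure Ω} [IsProbabilityMeasure μ]
    (X Y : Ω → ℝ) (hX : Measurable X) (hY : Measurable Y)
    (hXi : Integrable X μ) (hYi : Integrable Y μ) (hInd : IndepFun X Y μ)
    (F G : ℝ → ℝ) (hF : ∀ t, F t = (μ (X ⁻¹' Iic t)).toReal)
    (hG : ∀ t, G t = (μ (Y ⁻¹' Iic t)).toReal) :
    Integrable (fun t => F t * (1 - G t) + G t * (1 - F t)) volume ∧
      ∫ ω, |X ω - Y ω| ∂μ = ∫ t, (F t * (1 - G t) + G t * (1 - F t)) := by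
  set h : ℝ → ENNReal := fun t =>
    μ (X ⁻¹' Iic t ∩ Y ⁻¹' Ioi t) + μ (Y ⁻¹' Iic t ∩ X ⁻¹' Ioi t) with hdef
  have hkey := key_lintegral (μ := μ) X Y hX hY
  have hprod : ∀ t, h t = μ (X ⁻¹' Iic t) * μ (Y ⁻¹' Ioi t)
      + μ (Y ⁻¹' Iic t) * μ (X ⁻¹' Ioi t) := by
    intro t
    simp only [hdef]
    rw [hInd.measure_inter_preimage_eq_mul _ _ measurableSet_Iic measurableSet_Ioi,
      hInd.symm.measure_inter_preimage_eq_mul _ _ measurableSet_Iic measurableSet_Ioi]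
  have hmono : ∀ Z : Ω → ℝ, Monotone fun t => μ (Z ⁻¹' Iic t) := by
    intro Z a b hab
    exact measure_mono (Set.preimage_mono (Set.Iic_subset_Iic.2 hab))
  have hanti : ∀ Z : Ω → ℝ, Antitone fun t => μ (Z ⁻¹' Ioi t) := by
    intro Z a b hab
    exact measure_mono (Set.preimage_mono (Set.Ioi_subset_Ioi hab))
  have hmeash : Measurable h := by
    have : h = fun t => μ (X ⁻¹' Iic t) * μ (Y ⁻¹' Ioi t)
        + μ (Y ⁻¹' Iic t) * μ (X ⁻¹' Ioi t) := funext hprod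
    rw [this]
    exact (((hmono X).measurable.mul (hanti Y).measurable).add
      ((hmono Y).measurable.mul (hanti X).measurable))
  have hfin : ∫⁻ t, h t ≠ ⊤ := by
    rw [hkey]
    have hint : Integrable (fun ω => |X ω - Y ω|) μ := (hXi.sub hYi).abs
    have := hint.hasFiniteIntegral
    rw [HasFiniteIntegral] at this
    refine ne_of_lt (lt_of_le_of_lt (le_of_eq ?_) this)
    apply lintegral_congr
    intro ω
    rw [← Real.enorm_eq_ofReal_abs]
    simp [Real.nnnorm_abs]
  have hcompl : ∀ (Z : Ω → ℝ) (hZ : Measurable Z) (t : ℝ),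
      (μ (Z ⁻¹' Ioi t)).toReal = 1 - (μ (Z ⁻¹' Iic t)).toReal := by
    intro Z hZ t
    have hc : Z ⁻¹' Ioi t = (Z ⁻¹' Iic t)ᶜ := by
      ext ω; simp [not_le]
    rw [hc, measure_compl (hZ measurableSet_Iic) (measure_ne_top μ _), measure_univ,
      ENNReal.toReal_sub_of_le prob_le_one ENNReal.one_ne_top, ENNReal.toReal_one]
  have hpt : ∀ t, (h t).toReal = F t * (1 - G t) + G t * (1 - F t) := by
    intro t
    rw [hprod t, ENNReal.toReal_add (ENNReal.mul_ne_top (measure_ne_top μ _) (measure_ne_top μ _))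
      (ENNReal.mul_ne_top (measure_ne_top μ _) (measure_ne_top μ _)),
      ENNReal.toReal_mul, ENNReal.toReal_mul, hcompl Y hY, hcompl X hX, hF, hG]
  have heq : (fun t => F t * (1 - G t) + G t * (1 - F t)) = fun t => (h t).toReal :=
    funext fun t => (hpt t).symm
  constructor
  · rw [heq]
    exact integrable_toReal_of_lintegral_ne_top hmeash.aemeasurable hfin
  · rw [heq]
    rw [integral_eq_lintegral_of_nonneg_ae (Filter.Eventually.of_forall fun ω => abs_nonneg _)
      (f := fun ω => |X ω - Y ω|) (hX.sub hY).abs.aestronglyMeasurable,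
      integral_toReal hmeash.aemeasurable (Filter.Eventually.of_forall fun t => ?_), hkey]
    calc h t ≤ 1 + 1 := add_le_add prob_le_one prob_le_one
    _ < ⊤ := by norm_num

/-- Cramér–von Mises representation of the energy distance: for independent
integrable real random variables `X, Y` with cdfs `F, G` and independent copies
`X', Y'`, `2E|X-Y| - E|X-X'| - E|Y-Y'| = 2∫ (F t - G t)² dt`. -/
theorem energy_distance_eq_two_int_sq_cdf_diff
    {Ω : Type*} [MeasurableSpace Ω] {μ : Measure Ω} [IsProbabilityMeasure μ]
    (X Y X' Y' : Ω → ℝ)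
    (hIndep : iIndepFun ![X, Y, X', Y'] μ)
    (hX' : IdentDistrib X' X μ μ) (hY' : IdentDistrib Y' Y μ μ)
    (hX1 : Integrable X μ) (hY1 : Integrable Y μ)
    (F G : ℝ → ℝ)
    (hF : ∀ t, F t = ((μ.map X) (Set.Iic t)).toReal)
    (hG : ∀ t, G t = ((μ.map Y) (Set.Iic t)).toReal) :
    2 * ∫ ω, |X ω - Y ω| ∂μ - ∫ ω, |X ω - X' ω| ∂μ - ∫ ω, |Y ω - Y' ω| ∂μ
      = 2 * ∫ t : ℝ, (F t - G t) ^ 2 := by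
  -- integrability of the copies
  have hX'1 : Integrable X' μ := hX'.integrable_iff.2 hX1
  have hY'1 : Integrable Y' μ := hY'.integrable_iff.2 hY1
  -- measurable versions
  obtain ⟨X₀, hX₀m, hXeq⟩ : ∃ X₀, Measurable X₀ ∧ X =ᵐ[μ] X₀ :=
    ⟨_, hX1.1.aemeasurable.measurable_mk, hX1.1.aemeasurable.ae_eq_mk⟩
  obtain ⟨Y₀, hY₀m, hYeq⟩ : ∃ Y₀, Measurable Y₀ ∧ Y =ᵐ[μ] Y₀ :=
    ⟨_, hY1.1.aemeasurable.measurable_mk, hY1.1.aemeasurable.ae_eq_mk⟩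
  obtain ⟨X₁, hX₁m, hX'eq⟩ : ∃ X₁, Measurable X₁ ∧ X' =ᵐ[μ] X₁ :=
    ⟨_, hX'1.1.aemeasurable.measurable_mk, hX'1.1.aemeasurable.ae_eq_mk⟩
  obtain ⟨Y₁, hY₁m, hY'eq⟩ : ∃ Y₁, Measurable Y₁ ∧ Y' =ᵐ[μ] Y₁ :=
    ⟨_, hY'1.1.aemeasurable.measurable_mk, hY'1.1.aemeasurable.ae_eq_mk⟩
  have hX₀1 : Integrable X₀ μ := hX1.congr hXeq
  have hY₀1 : Integrable Y₀ μ := hY1.congr hYeq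
  have hX₁1 : Integrable X₁ μ := hX'1.congr hX'eq
  have hY₁1 : Integrable Y₁ μ := hY'1.congr hY'eq
  -- cdfs in preimage form
  have hmapX : μ.map X₀ = μ.map X := Measure.map_congr hXeq.symm
  have hmapY : μ.map Y₀ = μ.map Y := Measure.map_congr hYeq.symm
  have hmapX' : μ.map X₁ = μ.map X := (Measure.map_congr hX'eq.symm).trans hX'.map_eq
  have hmapY' : μ.map Y₁ = μ.map Y := (Measure.map_congr hY'eq.symm).trans hY'.map_eq
  have hF₀ : ∀ t, F t = (μ (X₀ ⁻¹' Set.Iic t)).toReal := fun t => by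
    rw [hF, ← hmapX, Measure.map_apply hX₀m measurableSet_Iic]
  have hG₀ : ∀ t, G t = (μ (Y₀ ⁻¹' Set.Iic t)).toReal := fun t => by
    rw [hG, ← hmapY, Measure.map_apply hY₀m measurableSet_Iic]
  have hF₁ : ∀ t, F t = (μ (X₁ ⁻¹' Set.Iic t)).toReal := fun t => by
    rw [hF, ← hmapX', Measure.map_apply hX₁m measurableSet_Iic]
  have hG₁ : ∀ t, G t = (μ (Y₁ ⁻¹' Set.Iic t)).toReal := fun t => by
    rw [hG, ← hmapY', Measure.map_apply hY₁m measurableSet_Iic]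
  -- independence
  have hIXY : IndepFun X₀ Y₀ μ :=
    IndepFun.congr (hIndep.indepFun (show (0 : Fin 4) ≠ 1 by decide)) hXeq hYeq
  have hIXX : IndepFun X₀ X₁ μ :=
    IndepFun.congr (hIndep.indepFun (show (0 : Fin 4) ≠ 2 by decide)) hXeq hX'eq
  have hIYY : IndepFun Y₀ Y₁ μ :=
    IndepFun.congr (hIndep.indepFun (show (1 : Fin 4) ≠ 3 by decide)) hYeq hY'eq
  -- the three key identities
  have k1 := key_integral X₀ Y₀ hX₀m hY₀m hX₀1 hY₀1 hIXY F G hF₀ hG₀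
  have k2 := key_integral X₀ X₁ hX₀m hX₁m hX₀1 hX₁1 hIXX F F hF₀ hF₁
  have k3 := key_integral Y₀ Y₁ hY₀m hY₁m hY₀1 hY₁1 hIYY G G hG₀ hG₁
  -- replace the integrals by their measurable versions
  have e1 : ∫ ω, |X ω - Y ω| ∂μ = ∫ ω, |X₀ ω - Y₀ ω| ∂μ := by
    apply integral_congr_ae
    filter_upwards [hXeq, hYeq] with ω h1 h2
    rw [h1, h2]
  have e2 : ∫ ω, |X ω - X' ω| ∂μ = ∫ ω, |X₀ ω - X₁ ω| ∂μ := by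
    apply integral_congr_ae
    filter_upwards [hXeq, hX'eq] with ω h1 h2
    rw [h1, h2]
  have e3 : ∫ ω, |Y ω - Y' ω| ∂μ = ∫ ω, |Y₀ ω - Y₁ ω| ∂μ := by
    apply integral_congr_ae
    filter_upwards [hYeq, hY'eq] with ω h1 h2
    rw [h1, h2]
  rw [e1, e2, e3, k1.2, k2.2, k3.2]
  calc (2 * ∫ t, (F t * (1 - G t) + G t * (1 - F t)))
        - (∫ t, (F t * (1 - F t) + F t * (1 - F t)))
        - (∫ t, (G t * (1 - G t) + G t * (1 - G t)))
      = ∫ t, (2 * (F t * (1 - G t) + G t * (1 - F t))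
          - (F t * (1 - F t) + F t * (1 - F t))
          - (G t * (1 - G t) + G t * (1 - G t))) := by
        have i1 : Integrable (fun t => 2 * (F t * (1 - G t) + G t * (1 - F t))) volume :=
          k1.1.const_mul 2
        have i2 : Integrable (fun t => 2 * (F t * (1 - G t) + G t * (1 - F t))
            - (F t * (1 - F t) + F t * (1 - F t))) volume := i1.sub k2.1
        rw [integral_sub i2 k3.1, integral_sub i1 k2.1, integral_const_mul]
    _ = ∫ t, 2 * (F t - G t) ^ 2 := by
        congr 1
        funext t
        ring
    _ = 2 * ∫ t : ℝ, (F t - G t) ^ 2 := integral_const_mul 2 _
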